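/- Let k be a symmetric positive-semidefinite kernel on a type ι and σ > 0 a noise level. For any n, any observation points x : Fin n → ι, any new observation point w : ι, and any z : ι, the Gaussian-process posterior variances satisfy the exact rank-one update identity σ²(z; x) − σ²(z; x⁺) = k(w, z; x)² / (σ²(w; x) + σ²), where x⁺ = Fin.snoc x w is x with w appended. -/

import Mathlib

open Matrix

/-- The Gaussian-process posterior covariance `k(z, z'; x)` given observation
points `x : Fin n → ι` and noise level `σ`. -/
noncomputable def postCov {ι : Type*} (k : ι → ι → ℝ) (σ : ℝ) {n : ℕ}
    (x : Fin n → ι) (z z' : ι) : ℝ :=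
  k z z' -
    dotProduct (fun i => k (x i) z)
      (Matrix.mulVec
        ((Matrix.of (fun i j => k (x i) (x j)) + σ ^ 2 • (1 : Matrix (Fin n) (Fin n) ℝ))⁻¹)
        (fun i => k (x i) z'))

/-- The Gaussian-process posterior variance `σ²(z; x) = k(z, z; x)`. -/
noncomputable def postVar {ι : Type*} (k : ι → ι → ℝ) (σ : ℝ) {n : ℕ}
    (x : Fin n → ι) (z : ι) : ℝ :=
  postCov k σ x z z

private lemma snoc_dot {n : ℕ} (g : Fin n → ℝ) (gl : ℝ) (f : Fin (n+1) → ℝ) :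
    Fin.snoc g gl ⬝ᵥ f = g ⬝ᵥ (fun i => f i.castSucc) + gl * f (Fin.last n) := by
  simp [dotProduct, Fin.sum_univ_castSucc]

private lemma mulVec_snoc_apply {n : ℕ} (M : Matrix (Fin (n+1)) (Fin (n+1)) ℝ)
    (g : Fin n → ℝ) (gl : ℝ) (j : Fin (n+1)) :
    (M *ᵥ Fin.snoc g gl) j = (fun l => M j l.castSucc) ⬝ᵥ g + M j (Fin.last n) * gl := by
  simp [Matrix.mulVec, dotProduct, Fin.sum_univ_castSucc]

private lemma dot_symm_swap {n : ℕ} {W : Matrix (Fin n) (Fin n) ℝ} (h : Wᵀ = W)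
    (u v : Fin n → ℝ) : u ⬝ᵥ W *ᵥ v = v ⬝ᵥ W *ᵥ u := by
  rw [Matrix.dotProduct_mulVec, ← Matrix.mulVec_transpose, h, dotProduct_comm]

theorem posterior_variance_rank_one_update
    {ι : Type*} (k : ι → ι → ℝ) (σ : ℝ)
    (hσ : 0 < σ)
    (hsymm : ∀ z z', k z z' = k z' z)
    (hpsd : ∀ (n : ℕ) (x : Fin n → ι),
      (Matrix.of (fun i j => k (x i) (x j)) : Matrix (Fin n) (Fin n) ℝ).PosSemidef)
    (n : ℕ) (x : Fin n → ι) (w : ι) (z : ι) :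
    postVar k σ x z - postVar k σ (Fin.snoc x w) z =
      (postCov k σ x w z) ^ 2 / (postVar k σ x w + σ ^ 2) := by
  classical
  simp only [postVar, postCov]
  set a : Fin n → ℝ := fun i => k (x i) z with hadef
  set b : Fin n → ℝ := fun i => k (x i) w with hbdef
  set K : Matrix (Fin n) (Fin n) ℝ :=
    Matrix.of (fun i j => k (x i) (x j)) + σ ^ 2 • (1 : Matrix (Fin n) (Fin n) ℝ) with hKdef
  set A : Matrix (Fin (n+1)) (Fin (n+1)) ℝ :=
    Matrix.of (fun i j : Fin (n+1) => k (Fin.snoc (α := fun _ => ι) x w i) (Fin.snoc (α := fun _ => ι) x w j))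
      + σ ^ 2 • (1 : Matrix (Fin (n+1)) (Fin (n+1)) ℝ) with hAdef
  set u : Fin n → ℝ := K⁻¹ *ᵥ b with hudef
  -- positive definiteness of K
  have hKpd : K.PosDef := by
    rw [hKdef]
    refine Matrix.PosDef.posSemidef_add (hpsd n x) ?_
    have : σ^2 • (1:Matrix (Fin n) (Fin n) ℝ) = Matrix.diagonal (fun _ => σ^2) := by
      ext i j; by_cases hij : i = j <;> simp [Matrix.one_apply, Matrix.diagonal_apply, hij]
    rw [this]
    exact Matrix.PosDef.diagonal (fun _ => by positivity)
  have hKdet : IsUnit K.det := (Matrix.isUnit_iff_isUnit_det K).mp hKpd.isUnit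
  have hKinv : K * K⁻¹ = 1 := Matrix.mul_nonsing_inv K hKdet
  have hKinvsymm : (K⁻¹)ᵀ = K⁻¹ := by
    rw [Matrix.transpose_nonsing_inv]
    congr 1
    simpa [Matrix.IsHermitian] using hKpd.isHermitian
  have hKu : K *ᵥ u = b := by
    rw [hudef, Matrix.mulVec_mulVec, hKinv, Matrix.one_mulVec]
  set s : ℝ := k w w + σ ^ 2 - b ⬝ᵥ u with hsdef
  -- positivity of s
  have hs : 0 < s := by
    set K0 : Matrix (Fin n) (Fin n) ℝ := Matrix.of (fun i j => k (x i) (x j)) with hK0def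
    set M : Matrix (Fin (n+1)) (Fin (n+1)) ℝ :=
      Matrix.of (fun i j : Fin (n+1) => k (Fin.snoc (α := fun _ => ι) x w i) (Fin.snoc (α := fun _ => ι) x w j)) with hMdef
    set y : Fin (n+1) → ℝ := Fin.snoc (-u) 1 with hydef
    have h0 : 0 ≤ y ⬝ᵥ M *ᵥ y := by simpa using (hpsd (n+1) (Fin.snoc x w)).dotProduct_mulVec_nonneg y
    have hMy1 : ∀ i : Fin n, (M *ᵥ y) i.castSucc = -((K0 *ᵥ u) i) + b i := by
      intro i
      rw [hydef, mulVec_snoc_apply]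
      have e1 : (fun l : Fin n => M i.castSucc l.castSucc) ⬝ᵥ (-u) = -((K0 *ᵥ u) i) := by
        simp only [dotProduct, Matrix.mulVec, hMdef, hK0def, Matrix.of_apply,
          Fin.snoc_castSucc, Pi.neg_apply, mul_neg]
        rw [← Finset.sum_neg_distrib]
      rw [e1]
      simp [hMdef, hbdef, Fin.snoc_castSucc, Fin.snoc_last]
    have hMy2 : (M *ᵥ y) (Fin.last n) = -(b ⬝ᵥ u) + k w w := by
      rw [hydef, mulVec_snoc_apply]
      have e1 : (fun l : Fin n => M (Fin.last n) l.castSucc) ⬝ᵥ (-u) = -(b ⬝ᵥ u) := by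
        simp only [dotProduct, Matrix.mulVec, hMdef, hbdef, Matrix.of_apply,
          Fin.snoc_castSucc, Fin.snoc_last, Pi.neg_apply, mul_neg]
        rw [← Finset.sum_neg_distrib]
        congr 1
        funext l
        rw [hsymm w (x l)]
      rw [e1]
      simp [hMdef, Fin.snoc_last]
    have hyMy : y ⬝ᵥ M *ᵥ y = u ⬝ᵥ (K0 *ᵥ u) - 2 * (b ⬝ᵥ u) + k w w := by
      have h1 : y ⬝ᵥ M *ᵥ y
          = (-u) ⬝ᵥ (fun i => (M *ᵥ y) i.castSucc) + 1 * (M *ᵥ y) (Fin.last n) := by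
        conv_lhs => rw [hydef]
        exact snoc_dot _ _ _
      rw [h1, hMy2]
      have h2 : (fun i => (M *ᵥ y) i.castSucc) = fun i => -((K0 *ᵥ u) i) + b i :=
        funext fun i => hMy1 i
      rw [h2]
      simp only [dotProduct, Pi.neg_apply, neg_mul, mul_add, mul_neg, neg_neg]
      rw [Finset.sum_add_distrib]
      have hbu : ∑ i, -(u i * b i) = -(b ⬝ᵥ u) := by
        simp only [dotProduct, ← Finset.sum_neg_distrib]
        exact Finset.sum_congr rfl fun l _ => by ring
      rw [hbu]
      simp only [dotProduct]
      ring
    have hbu2 : b ⬝ᵥ u = u ⬝ᵥ (K0 *ᵥ u) + σ^2 * (u ⬝ᵥ u) := by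
      rw [← hKu, dotProduct_comm, hKdef]
      rw [Matrix.add_mulVec, dotProduct_add, Matrix.smul_mulVec, Matrix.one_mulVec,
        dotProduct_smul]
      rw [smul_eq_mul]
    have huu : 0 ≤ u ⬝ᵥ u := by
      rw [dotProduct]
      exact Finset.sum_nonneg fun i _ => mul_self_nonneg _
    have hσ2uu : 0 ≤ σ^2 * (u ⬝ᵥ u) := by positivity
    rw [hyMy] at h0
    have hσ2 : 0 < σ^2 := by positivity
    rw [hsdef]
    linarith
  have hsne : s ≠ 0 := hs.ne'
  -- the explicit inverse of A
  set B : Matrix (Fin (n+1)) (Fin (n+1)) ℝ :=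
    Matrix.of (Fin.snoc
      (fun i => Fin.snoc (fun j => K⁻¹ i j + u i * u j / s) (-(u i)/s))
      (Fin.snoc (fun j => -(u j)/s) (1/s))) with hBdef
  have hB1 : ∀ i j : Fin n, B i.castSucc j.castSucc = K⁻¹ i j + u i * u j / s := by
    intro i j; simp [hBdef]
  have hB2 : ∀ i : Fin n, B i.castSucc (Fin.last n) = -(u i)/s := by
    intro i; simp [hBdef]
  have hB3 : ∀ j : Fin n, B (Fin.last n) j.castSucc = -(u j)/s := by
    intro j; simp [hBdef]
  have hB4 : B (Fin.last n) (Fin.last n) = 1/s := by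
    simp [hBdef]
  have hA1 : ∀ i j : Fin n, A i.castSucc j.castSucc = K i j := by
    intro i j
    simp [hAdef, hKdef, Matrix.add_apply, Matrix.smul_apply, Matrix.one_apply,
      Fin.snoc_castSucc, Fin.castSucc_inj]
  have hA2 : ∀ i : Fin n, A i.castSucc (Fin.last n) = b i := by
    intro i
    simp [hAdef, hbdef, Matrix.add_apply, Matrix.smul_apply, Matrix.one_apply,
      Fin.snoc_castSucc, Fin.snoc_last, (Fin.castSucc_lt_last i).ne]
  have hA3 : ∀ j : Fin n, A (Fin.last n) j.castSucc = b j := by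
    intro j
    simp [hAdef, hbdef, Matrix.add_apply, Matrix.smul_apply, Matrix.one_apply,
      Fin.snoc_castSucc, Fin.snoc_last, (Fin.castSucc_lt_last j).ne', hsymm w (x j)]
  have hA4 : A (Fin.last n) (Fin.last n) = k w w + σ^2 := by
    simp [hAdef, Matrix.add_apply, Matrix.smul_apply, Matrix.one_apply, Fin.snoc_last]
  -- b ᵥ* K⁻¹ = u entrywise
  have hbKinv : ∀ j : Fin n, ∑ l, b l * K⁻¹ l j = u j := by
    intro j
    have : ∑ l, b l * K⁻¹ l j = (b ᵥ* K⁻¹) j := rfl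
    rw [this, ← Matrix.mulVec_transpose, hKinvsymm, ← hudef]
  have hABone : A * B = 1 := by
    ext i j
    refine Fin.lastCases ?_ (fun i => ?_) i <;> refine Fin.lastCases ?_ (fun j => ?_) j
    · -- (last, last)
      rw [Matrix.mul_apply, Fin.sum_univ_castSucc]
      simp only [hA1, hA2, hA3, hA4, hB1, hB2, hB3, hB4]
      have e1 : ∑ l, b l * (-(u l)/s) = (b ⬝ᵥ u) * (-(1/s)) := by
        simp only [dotProduct]
        rw [Finset.sum_mul]
        exact Finset.sum_congr rfl fun l _ => by ring
      rw [e1, Matrix.one_apply_eq]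
      field_simp
      rw [hsdef]; ring
    · -- (last, castSucc j)
      rw [Matrix.mul_apply, Fin.sum_univ_castSucc]
      simp only [hA1, hA2, hA3, hA4, hB1, hB2, hB3, hB4]
      have e1 : ∑ l, b l * (K⁻¹ l j + u l * u j / s)
          = u j + (b ⬝ᵥ u) * (u j / s) := by
        simp only [mul_add]
        rw [Finset.sum_add_distrib]
        congr 1
        · exact hbKinv j
        · simp only [dotProduct]
          rw [Finset.sum_mul]
          exact Finset.sum_congr rfl fun l _ => by ring
      rw [e1]
      have : (1 : Matrix (Fin (n+1)) (Fin (n+1)) ℝ) (Fin.last n) j.castSucc = 0 := by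
        exact Matrix.one_apply_ne (Fin.castSucc_lt_last j).ne'
      rw [this]
      field_simp
      rw [hsdef]; ring
    · -- (castSucc i, last)
      rw [Matrix.mul_apply, Fin.sum_univ_castSucc]
      simp only [hA1, hA2, hA3, hA4, hB1, hB2, hB3, hB4]
      have e1 : ∑ l, K i l * (-(u l)/s) = (K *ᵥ u) i * (-(1/s)) := by
        have hmv : (K *ᵥ u) i = ∑ l, K i l * u l := rfl
        rw [hmv, Finset.sum_mul]
        exact Finset.sum_congr rfl fun l _ => by ring
      rw [e1, hKu]
      have : (1 : Matrix (Fin (n+1)) (Fin (n+1)) ℝ) i.castSucc (Fin.last n) = 0 :=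
        Matrix.one_apply_ne (Fin.castSucc_lt_last i).ne
      rw [this]
      ring
    · -- (castSucc i, castSucc j)
      rw [Matrix.mul_apply, Fin.sum_univ_castSucc]
      simp only [hA1, hA2, hA3, hA4, hB1, hB2, hB3, hB4]
      have e1 : ∑ l, K i l * (K⁻¹ l j + u l * u j / s)
          = (K * K⁻¹) i j + (K *ᵥ u) i * (u j / s) := by
        simp only [mul_add]
        rw [Finset.sum_add_distrib]
        congr 1
        have hmv : (K *ᵥ u) i = ∑ l, K i l * u l := rfl
        rw [hmv, Finset.sum_mul]
        exact Finset.sum_congr rfl fun l _ => by ring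
      rw [e1, hKinv, hKu]
      have : (1 : Matrix (Fin (n+1)) (Fin (n+1)) ℝ) i.castSucc j.castSucc
          = (1 : Matrix (Fin n) (Fin n) ℝ) i j := by
        simp [Matrix.one_apply, Fin.castSucc_inj]
      rw [this]
      ring
  have hAinv : A⁻¹ = B := Matrix.inv_eq_right_inv hABone
  -- identify the snoc vector
  have hv : (fun i : Fin (n+1) => k (Fin.snoc (α := fun _ => ι) x w i) z) = Fin.snoc a (k w z) := by
    funext i
    refine Fin.lastCases ?_ (fun i => ?_) i
    · simp
    · simp [hadef]
  rw [hAinv, hv]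
  set β : ℝ := k w z with hβdef
  set t : ℝ := u ⬝ᵥ a with htdef
  -- compute B *ᵥ (snoc a β)
  have hBv : B *ᵥ Fin.snoc a β
      = Fin.snoc (fun i => (K⁻¹ *ᵥ a) i + u i * (t / s) - u i * (β / s)) ((β - t)/s) := by
    funext j
    refine Fin.lastCases ?_ (fun j => ?_) j
    · rw [mulVec_snoc_apply, Fin.snoc_last]
      simp only [hB3, hB4]
      have e1 : (fun l => -(u l)/s) ⬝ᵥ a = (u ⬝ᵥ a) * (-(1/s)) := by
        simp only [dotProduct]
        rw [Finset.sum_mul]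
        exact Finset.sum_congr rfl fun l _ => by ring
      rw [e1, ← htdef]
      field_simp
      ring
    · rw [mulVec_snoc_apply, Fin.snoc_castSucc]
      simp only [hB1, hB2]
      have e1 : (fun l => K⁻¹ j l + u j * u l / s) ⬝ᵥ a
          = (K⁻¹ *ᵥ a) j + u j * ((u ⬝ᵥ a) / s) := by
        simp only [dotProduct, Matrix.mulVec, add_mul]
        rw [Finset.sum_add_distrib]
        congr 1
        rw [Finset.sum_div, Finset.mul_sum]
        exact Finset.sum_congr rfl fun l _ => by ring
      rw [e1, ← htdef]
      ring
  rw [hBv, snoc_dot]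
  simp only [Fin.snoc_castSucc, Fin.snoc_last]
  have e2 : a ⬝ᵥ (fun i => (K⁻¹ *ᵥ a) i + u i * (t / s) - u i * (β / s))
      = a ⬝ᵥ (K⁻¹ *ᵥ a) + (a ⬝ᵥ u) * (t/s) - (a ⬝ᵥ u) * (β/s) := by
    simp only [dotProduct]
    rw [Finset.sum_mul, Finset.sum_mul, ← Finset.sum_add_distrib, ← Finset.sum_sub_distrib]
    exact Finset.sum_congr rfl fun l _ => by ring
  rw [e2]
  have hta : a ⬝ᵥ u = t := by rw [htdef, dotProduct_comm]
  have htb : b ⬝ᵥ (K⁻¹ *ᵥ a) = t := by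
    rw [dot_symm_swap hKinvsymm, htdef, ← hudef, dotProduct_comm]
  rw [hta, htb]
  have hden : k w w - b ⬝ᵥ (K⁻¹ *ᵥ b) + σ^2 = s := by
    rw [hsdef, hudef]; ring
  rw [hden]
  field_simp
  ring
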